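/- Assume experts die in the order e_1, e_2, … (known in advance), one per night. In the set of effective orderings ℰ, the number of effective orderings whose first element is e_i equals ⌈2^{K−i−1}⌉. -/
import Mathlib


open Finset

namespace EffOrdProof

variable {K : ℕ}

def lastF (hK : 0 < K) : Fin K := ⟨K - 1, by omega⟩

lemma le_lastF (hK : 0 < K) (s : Fin K) : s ≤ lastF hK := by
  have := s.isLt
  simp only [lastF, Fin.le_def]
  omega

def Tset (hK : 0 < K) (i : Fin K) (S : Finset (Fin K)) : Finset (Fin K) :=
  insert i (insert (lastF hK) S)

lemma filt_ne (hK : 0 < K) (i : Fin K) (S : Finset (Fin K)) (s : Fin K) :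
    ((Tset hK i S).filter (fun x => s ≤ x)).Nonempty :=
  ⟨lastF hK, by simp [Tset, le_lastF hK s]⟩

noncomputable def behF (hK : 0 < K) (i : Fin K) (S : Finset (Fin K)) (s : Fin K) : Fin K :=
  ((Tset hK i S).filter (fun x => s ≤ x)).min' (filt_ne hK i S s)

lemma behF_mem (hK : 0 < K) (i : Fin K) (S : Finset (Fin K)) (s : Fin K) :
    behF hK i S s ∈ Tset hK i S := (mem_filter.mp (min'_mem _ _)).1

lemma le_behF (hK : 0 < K) (i : Fin K) (S : Finset (Fin K)) (s : Fin K) :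
    s ≤ behF hK i S s := (mem_filter.mp (min'_mem _ _)).2

lemma behF_le (hK : 0 < K) (i : Fin K) (S : Finset (Fin K)) {s x : Fin K}
    (hx : x ∈ Tset hK i S) (hsx : s ≤ x) : behF hK i S s ≤ x :=
  min'_le _ _ (mem_filter.mpr ⟨hx, hsx⟩)

lemma behF_fixed_iff (hK : 0 < K) (i : Fin K) (S : Finset (Fin K)) (x : Fin K) :
    behF hK i S x = x ↔ x ∈ Tset hK i S := by
  constructor
  · intro h; rw [← h]; exact behF_mem hK i S x
  · intro h; exact le_antisymm (behF_le hK i S h le_rfl) (le_behF hK i S x)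

lemma behF_realized (hK : 0 < K)
    (beh : Equiv.Perm (Fin K) → Fin K → Fin K)
    (hbeh : ∀ (π : Equiv.Perm (Fin K)) (s : Fin K),
      (s : ℕ) ≤ (beh π s : ℕ) ∧
      ∀ e : Fin K, (s : ℕ) ≤ (e : ℕ) → π.symm (beh π s) ≤ π.symm e)
    (i : Fin K) (S : Finset (Fin K)) :
    ∃ π, beh π = behF hK i S := by
  classical
  set ρ : Fin K → ℕ := fun x => (if x ∈ Tset hK i S then 0 else K) + x.val with hρ
  have ρinj : Function.Injective ρ := by
    intro x y hxy
    have hx := x.isLt; have hy := y.isLt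
    simp only [hρ] at hxy
    split_ifs at hxy <;> exact Fin.ext (by omega)
  set π := Tuple.sort ρ with hπ
  have hsm : StrictMono (ρ ∘ π) :=
    (Tuple.monotone_sort ρ).strictMono_of_injective (ρinj.comp π.injective)
  have hcmp : ∀ x y : Fin K, π.symm x ≤ π.symm y ↔ ρ x ≤ ρ y := by
    intro x y
    rw [← hsm.le_iff_le]
    simp [Function.comp]
  refine ⟨π, funext fun s => ?_⟩
  set b := behF hK i S s with hb
  have hb1 : s ≤ b := le_behF hK i S s
  have hbT : b ∈ Tset hK i S := behF_mem hK i S s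
  have hbmin : ∀ e : Fin K, (s : ℕ) ≤ (e : ℕ) → π.symm b ≤ π.symm e := by
    intro e he
    rw [hcmp]
    by_cases hmem : e ∈ Tset hK i S
    · have hbe : b ≤ e := behF_le hK i S hmem (Fin.le_def.mpr he)
      simp only [hρ, if_pos hbT, if_pos hmem]
      exact Nat.add_le_add le_rfl (Fin.le_def.mp hbe)
    · have := b.isLt
      simp only [hρ, if_pos hbT, if_neg hmem]
      omega
  have h1 := (hbeh π s).1
  have h2 := (hbeh π s).2
  have e1 : π.symm (beh π s) ≤ π.symm b := h2 b (Fin.le_def.mp hb1)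
  have e2 : π.symm b ≤ π.symm (beh π s) := hbmin (beh π s) h1
  exact π.symm.injective (le_antisymm e1 e2)

end EffOrdProof


/-- **Counting effective orderings starting with a given expert.**
Experts die in order: expert `e` (of index `e : Fin K`, 0-indexed) dies at the
end of day `e`, one per night, so on day `s` the alive experts are those with
`s ≤ e`.  `beh π s` is the first alive expert of `π` on day `s`.  The number of
distinct behaviors (effective orderings) whose first element is `i` is
`⌈2^(K - i - 2)⌉`, which with 1-indexed experts is the paper's `⌈2^{K-i-1}⌉`
(the truncated natural subtraction `K - i - 2` realizes the ceiling `⌈2^{-1}⌉ = 1`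
for the last expert). -/
theorem effective_orderings_starting_count (K : ℕ) (hK : 0 < K)
    (beh : Equiv.Perm (Fin K) → Fin K → Fin K)
    (hbeh : ∀ (π : Equiv.Perm (Fin K)) (s : Fin K),
      (s : ℕ) ≤ (beh π s : ℕ) ∧
      ∀ e : Fin K, (s : ℕ) ≤ (e : ℕ) → π.symm (beh π s) ≤ π.symm e)
    (i : Fin K) :
    (((Finset.univ : Finset (Equiv.Perm (Fin K))).image beh).filter
        (fun b => b ⟨0, hK⟩ = i)).card = 2 ^ (K - (i : ℕ) - 2) := by
  classical
  set L : Fin K := EffOrdProof.lastF hK with hL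
  have key : ((Finset.univ : Finset (Equiv.Perm (Fin K))).image beh).filter
        (fun b => b ⟨0, hK⟩ = i)
      = (Finset.Ioo i L).powerset.image (EffOrdProof.behF hK i) := by
    ext b
    simp only [mem_filter, mem_image, mem_univ, true_and, mem_powerset]
    constructor
    · rintro ⟨⟨π, hπ⟩, hb0⟩
      have hL' : ∀ s s' : Fin K, s ≤ s' → (s' : ℕ) ≤ (b s : ℕ) → b s' = b s := by
        intro s s' hss' hs'bs
        have p1 := (hbeh π s').1
        have p2 := (hbeh π s').2
        have q1 := (hbeh π s).1
        have q2 := (hbeh π s).2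
        rw [hπ] at p1 p2 q1 q2
        have e1 : π.symm (b s') ≤ π.symm (b s) := p2 (b s) hs'bs
        have e2 : π.symm (b s) ≤ π.symm (b s') :=
          q2 (b s') (le_trans (Fin.le_def.mp hss') p1)
        exact π.symm.injective (le_antisymm e1 e2)
      have hzle : ∀ x : Fin K, (⟨0, hK⟩ : Fin K) ≤ x := fun x => Fin.le_def.mpr (Nat.zero_le _)
      have hfix : ∀ s : Fin K, b (b s) = b s := by
        intro s
        have q1 := (hbeh π s).1
        rw [hπ] at q1
        exact hL' s (b s) (Fin.le_def.mpr q1) le_rfl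
      have hgei : ∀ s : Fin K, b s = s → i ≤ s := by
        intro s hs
        by_contra hlt
        push_neg at hlt
        have : b s = b ⟨0, hK⟩ := hL' ⟨0, hK⟩ s (hzle s)
          (by rw [hb0]; exact le_of_lt (Fin.lt_def.mp hlt))
        rw [hs, hb0] at this
        exact absurd this (Fin.ne_of_lt hlt)
      have hbi : b i = i := by
        have := hL' ⟨0, hK⟩ i (hzle i) (by rw [hb0])
        rw [this, hb0]
      have hbL : b L = L := by
        have q1 := (hbeh π L).1
        rw [hπ] at q1
        exact le_antisymm (EffOrdProof.le_lastF hK (b L)) (Fin.le_def.mpr q1)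
      set S : Finset (Fin K) :=
        (Finset.univ.filter (fun x => b x = x)) ∩ Finset.Ioo i L with hS
      have hSsub : S ⊆ Finset.Ioo i L := inter_subset_right
      have hTfix : ∀ x ∈ EffOrdProof.Tset hK i S, b x = x := by
        intro x hx
        rcases mem_insert.mp hx with h | hx
        · rw [h]; exact hbi
        rcases mem_insert.mp hx with h | hx
        · rw [h]; exact hbL
        · exact (mem_filter.mp (mem_of_mem_inter_left hx)).2
      have hbeq : b = EffOrdProof.behF hK i S := by
        funext s
        have q1 := (hbeh π s).1
        rw [hπ] at q1
        have hsb : s ≤ b s := Fin.le_def.mpr q1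
        have hmin : ∀ x ∈ EffOrdProof.Tset hK i S, s ≤ x → b s ≤ x := by
          intro x hx hsx
          by_contra hgt
          push_neg at hgt
          have := hL' s x hsx (le_of_lt (Fin.lt_def.mp hgt))
          rw [hTfix x hx] at this
          exact absurd this (Fin.ne_of_lt hgt)
        have hmemT : b s ∈ EffOrdProof.Tset hK i S := by
          by_cases h1 : b s = i
          · rw [h1]; exact mem_insert_self _ _
          by_cases h2 : b s = L
          · rw [h2]; exact mem_insert_of_mem (mem_insert_self _ _)
          · refine mem_insert_of_mem (mem_insert_of_mem ?_)
            refine mem_inter.mpr ⟨mem_filter.mpr ⟨mem_univ _, hfix s⟩, mem_Ioo.mpr ⟨?_, ?_⟩⟩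
            · exact lt_of_le_of_ne (hgei (b s) (hfix s)) (Ne.symm h1)
            · exact lt_of_le_of_ne (EffOrdProof.le_lastF hK (b s)) h2
        exact le_antisymm
          (hmin _ (EffOrdProof.behF_mem hK i S s) (EffOrdProof.le_behF hK i S s))
          (EffOrdProof.behF_le hK i S hmemT hsb)
      exact ⟨S, hSsub, hbeq.symm⟩
    · rintro ⟨S, hS, rfl⟩
      have hrz := EffOrdProof.behF_realized hK beh hbeh i S
      refine ⟨hrz, ?_⟩
      have hzle : ∀ x : Fin K, (⟨0, hK⟩ : Fin K) ≤ x := fun x => Fin.le_def.mpr (Nat.zero_le _)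
      have hiT : i ∈ EffOrdProof.Tset hK i S := mem_insert_self _ _
      have h1 : EffOrdProof.behF hK i S ⟨0, hK⟩ ≤ i :=
        EffOrdProof.behF_le hK i S hiT (hzle i)
      have h2 : i ≤ EffOrdProof.behF hK i S ⟨0, hK⟩ := by
        have hm := EffOrdProof.behF_mem hK i S ⟨0, hK⟩
        rcases mem_insert.mp hm with h | hm
        · rw [h]
        rcases mem_insert.mp hm with h | hm
        · rw [h]; exact EffOrdProof.le_lastF hK i
        · exact le_of_lt (mem_Ioo.mp (hS hm)).1
      exact le_antisymm h1 h2
  rw [key]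
  rw [Finset.card_image_of_injOn, Finset.card_powerset, Fin.card_Ioo]
  · have hLval : (L : ℕ) = K - 1 := rfl
    rw [hLval]
    congr 1
    omega
  · intro S1 hS1 S2 hS2 heq
    simp only [Finset.mem_coe, mem_powerset] at hS1 hS2
    have hT : EffOrdProof.Tset hK i S1 = EffOrdProof.Tset hK i S2 := by
      ext x
      rw [← EffOrdProof.behF_fixed_iff hK i S1 x, ← EffOrdProof.behF_fixed_iff hK i S2 x, heq]
    ext x
    constructor
    · intro hx
      have hxIoo := mem_Ioo.mp (hS1 hx)
      have : x ∈ EffOrdProof.Tset hK i S2 := by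
        rw [← hT]; exact mem_insert_of_mem (mem_insert_of_mem hx)
      rcases mem_insert.mp this with h | h
      · exact absurd h (Fin.ne_of_gt hxIoo.1)
      rcases mem_insert.mp h with h | h
      · exact absurd h (Fin.ne_of_lt hxIoo.2)
      · exact h
    · intro hx
      have hxIoo := mem_Ioo.mp (hS2 hx)
      have : x ∈ EffOrdProof.Tset hK i S1 := by
        rw [hT]; exact mem_insert_of_mem (mem_insert_of_mem hx)
      rcases mem_insert.mp this with h | h
      · exact absurd h (Fin.ne_of_gt hxIoo.1)
      rcases mem_insert.mp h with h | h
      · exact absurd h (Fin.ne_of_lt hxIoo.2)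
      · exact h
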